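/- On K' = K ⊕ K define, for t ≥ 0, S'_t(f ⊕ g) = (S_t f + J_t g) ⊕ (S_t^* g), where (J_t g)(x) = g(t−x) for 0 < x < t and (J_t g)(x) = 0 for x > t. Then every S'_t is a unitary operator on K', S'_0 = I, S'_{t+s} = S'_t S'_s for all s, t ≥ 0, t ↦ S'_t(f ⊕ g) is continuous for every f, g, and S'_t(f ⊕ 0) = (S_t f) ⊕ 0; that is, (S'_t)_{t≥0} is a strongly continuous semigroup of unitaries dilating the right-shift semigroup (S_t). -/

import Mathlib

set_option maxHeartbeats 1000000


open MeasureTheory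

noncomputable section

/-- The measure defining `K = L²(0,∞)`. -/
def mu0 : Measure ℝ := volume.restrict (Set.Ioi (0:ℝ))

/-- The Hilbert space `K = L²(0,∞)`. -/
abbrev Kspace := Lp ℂ 2 mu0

/-- The Hilbert space `K' = K ⊕ K`. -/
abbrev K2 := WithLp 2 (Kspace × Kspace)

/-- The identification `f ⊕ g` of a pair with an element of `K' = K ⊕ K`. -/
def pmk (f g : Kspace) : K2 := (WithLp.equiv 2 (Kspace × Kspace)).symm (f, g)

namespace Stmt12

open Set Filter ContinuousLinearMap Topology
open scoped ENNReal NNReal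

local notation "⟪" x ", " y "⟫" => @inner ℂ _ _ x y

/-- extension by zero of (a representative of) an element of `L²(0,∞)` -/
def e0 (f : Kspace) : ℝ → ℂ := (Set.Ioi (0:ℝ)).indicator f

lemma e0_pos (f : Kspace) {x : ℝ} (hx : 0 < x) : e0 f x = f x :=
  Set.indicator_of_mem hx _

lemma e0_nonpos (f : Kspace) {x : ℝ} (hx : x ≤ 0) : e0 f x = 0 :=
  Set.indicator_of_notMem (by simpa using hx) _

lemma e0_sm (f : Kspace) : StronglyMeasurable (e0 f) :=
  (Lp.stronglyMeasurable f).indicator measurableSet_Ioi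

lemma memLp_e0 (f : Kspace) : MemLp (e0 f) 2 volume := by
  refine ⟨(e0_sm f).aestronglyMeasurable, ?_⟩
  rw [e0, eLpNorm_indicator_eq_eLpNorm_restrict measurableSet_Ioi]
  exact Lp.eLpNorm_lt_top f

lemma mu0_ae_of_vol {u v : ℝ → ℂ} (h : u =ᵐ[volume] v) : u =ᵐ[mu0] v :=
  h.filter_mono (ae_mono Measure.restrict_le_self)

lemma mu0_ae_iff {u v : ℝ → ℂ} :
    u =ᵐ[mu0] v ↔ ∀ᵐ x ∂volume, x ∈ Set.Ioi (0:ℝ) → u x = v x :=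
  ae_restrict_iff' measurableSet_Ioi

lemma e0_ae (f : Kspace) : (f : ℝ → ℂ) =ᵐ[mu0] e0 f :=
  mu0_ae_iff.2 (Filter.Eventually.of_forall fun x hx => (e0_pos f hx).symm)

lemma mp_add (c : ℝ) : MeasurePreserving (fun x : ℝ => x + c) volume volume :=
  measurePreserving_add_right volume c

lemma mp_sub (c : ℝ) : MeasurePreserving (fun x : ℝ => x - c) volume volume := by
  simpa [sub_eq_add_neg] using measurePreserving_add_right volume (-c)

lemma mp_neg : MeasurePreserving (fun x : ℝ => -x) volume volume :=
  Measure.measurePreserving_neg volume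

lemma mp_sub_left (c : ℝ) : MeasurePreserving (fun x : ℝ => c - x) volume volume := by
  have := (measurePreserving_add_left volume c).comp mp_neg
  simpa [Function.comp_def, sub_eq_add_neg] using this

lemma ae_comp_add {u v : ℝ → ℂ} (c : ℝ) (h : u =ᵐ[volume] v) :
    (fun x => u (x + c)) =ᵐ[volume] fun x => v (x + c) :=
  (mp_add c).quasiMeasurePreserving.ae_eq_comp h

lemma ae_comp_sub {u v : ℝ → ℂ} (c : ℝ) (h : u =ᵐ[volume] v) :
    (fun x => u (x - c)) =ᵐ[volume] fun x => v (x - c) :=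
  (mp_sub c).quasiMeasurePreserving.ae_eq_comp h

lemma ae_comp_sub_left {u v : ℝ → ℂ} (c : ℝ) (h : u =ᵐ[volume] v) :
    (fun x => u (c - x)) =ᵐ[volume] fun x => v (c - x) :=
  (mp_sub_left c).quasiMeasurePreserving.ae_eq_comp h

section CoeLemmas

variable {T : Kspace →L[ℂ] Kspace} {t : ℝ}

/-- clean form of the hypothesis on `S t` -/
lemma coe_S (ht : 0 ≤ t)
    (hT : ∀ f : Kspace, (T f : ℝ → ℂ) =ᵐ[mu0] fun x => if t < x then f (x - t) else 0)
    (f : Kspace) : (T f : ℝ → ℂ) =ᵐ[mu0] fun x => e0 f (x - t) := by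
  refine (hT f).trans (mu0_ae_iff.2 (Filter.Eventually.of_forall fun x _ => ?_))
  rcases lt_or_ge t x with h | h
  · rw [if_pos h, e0_pos f (by linarith)]
  · rw [if_neg (not_lt.2 h), e0_nonpos f (by linarith)]

lemma e0_S (ht : 0 ≤ t)
    (hT : ∀ f : Kspace, (T f : ℝ → ℂ) =ᵐ[mu0] fun x => if t < x then f (x - t) else 0)
    (f : Kspace) : e0 (T f) =ᵐ[volume] fun x => e0 f (x - t) := by
  filter_upwards [mu0_ae_iff.1 (coe_S ht hT f)] with x hx
  rcases lt_or_ge 0 x with h0 | h0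
  · rw [e0_pos _ h0]; exact hx h0
  · rw [e0_nonpos _ h0, e0_nonpos f (by linarith)]

lemma coe_J (ht : 0 ≤ t)
    (hT : ∀ g : Kspace, (T g : ℝ → ℂ) =ᵐ[mu0] fun x => if x < t then g (t - x) else 0)
    (g : Kspace) : (T g : ℝ → ℂ) =ᵐ[mu0] fun x => e0 g (t - x) := by
  refine (hT g).trans (mu0_ae_iff.2 (Filter.Eventually.of_forall fun x _ => ?_))
  rcases lt_or_ge x t with h | h
  · rw [if_pos h, e0_pos g (by linarith)]
  · rw [if_neg (not_lt.2 h), e0_nonpos g (by linarith)]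

lemma e0_J (ht : 0 ≤ t)
    (hT : ∀ g : Kspace, (T g : ℝ → ℂ) =ᵐ[mu0] fun x => if x < t then g (t - x) else 0)
    (g : Kspace) :
    e0 (T g) =ᵐ[volume] fun x => if 0 < x then e0 g (t - x) else 0 := by
  filter_upwards [mu0_ae_iff.1 (coe_J ht hT g)] with x hx
  rcases lt_or_ge 0 x with h0 | h0
  · rw [e0_pos _ h0, if_pos h0]; exact hx h0
  · rw [e0_nonpos _ h0, if_neg (not_lt.2 h0)]

/-- membership for the shifted extension -/
lemma memLp_comp_add (g : Kspace) (t : ℝ) : MemLp (fun x => e0 g (x + t)) 2 mu0 :=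
  ((memLp_e0 g).comp_measurePreserving (mp_add t)).mono_measure Measure.restrict_le_self

/-- the adjoint formula : `(S t)* g = g (· + t)` a.e. -/
lemma coe_adj (ht : 0 ≤ t)
    (hT : ∀ f : Kspace, (T f : ℝ → ℂ) =ᵐ[mu0] fun x => if t < x then f (x - t) else 0)
    (g : Kspace) :
    (ContinuousLinearMap.adjoint T g : ℝ → ℂ) =ᵐ[mu0] fun x => e0 g (x + t) := by
  have key : ContinuousLinearMap.adjoint T g = (memLp_comp_add g t).toLp _ := by
    apply ext_inner_left ℂ
    intro f
    rw [ContinuousLinearMap.adjoint_inner_right, L2.inner_def, L2.inner_def]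
    have h1 : ∫ a, ⟪(T f) a, g a⟫ ∂mu0
        = ∫ a, ⟪e0 f (a - t), e0 g a⟫ ∂mu0 := by
      refine integral_congr_ae ?_
      filter_upwards [coe_S ht hT f, e0_ae g] with x h1 h2
      rw [h1, h2]
    have h2 : ∫ a, ⟪f a, ((memLp_comp_add g t).toLp _) a⟫ ∂mu0
        = ∫ a, ⟪e0 f a, e0 g (a + t)⟫ ∂mu0 := by
      refine integral_congr_ae ?_
      filter_upwards [(memLp_comp_add g t).coeFn_toLp, e0_ae f] with x h1 h2
      rw [h1, h2]
    rw [h1, h2]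
    have h3 : ∫ a, ⟪e0 f (a - t), e0 g a⟫ ∂mu0
        = ∫ a, ⟪e0 f (a - t), e0 g a⟫ ∂volume := by
      rw [mu0]
      refine setIntegral_eq_integral_of_forall_compl_eq_zero fun x hx => ?_
      have : x ≤ 0 := by simpa using hx
      rw [e0_nonpos g this]
      simp
    have h4 : ∫ a, ⟪e0 f a, e0 g (a + t)⟫ ∂mu0
        = ∫ a, ⟪e0 f a, e0 g (a + t)⟫ ∂volume := by
      rw [mu0]
      refine setIntegral_eq_integral_of_forall_compl_eq_zero fun x hx => ?_
      have : x ≤ 0 := by simpa using hx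
      rw [e0_nonpos f this]
      simp
    rw [h3, h4]
    have h5 := (mp_add t).integral_comp (MeasurableEquiv.addRight t).measurableEmbedding
      (fun a => ⟪e0 f (a - t), e0 g a⟫)
    rw [← h5]
    congr 1
    funext x
    simp only [add_sub_cancel_right]
  rw [key]
  exact (memLp_comp_add g t).coeFn_toLp

lemma e0_adj (ht : 0 ≤ t)
    (hT : ∀ f : Kspace, (T f : ℝ → ℂ) =ᵐ[mu0] fun x => if t < x then f (x - t) else 0)
    (g : Kspace) :
    e0 (ContinuousLinearMap.adjoint T g) =ᵐ[volume] fun x => if 0 < x then e0 g (x + t) else 0 := by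
  filter_upwards [mu0_ae_iff.1 (coe_adj ht hT g)] with x hx
  rcases lt_or_ge 0 x with h0 | h0
  · rw [e0_pos _ h0, if_pos h0]; exact hx h0
  · rw [e0_nonpos _ h0, if_neg (not_lt.2 h0)]

end CoeLemmas
section Identities

variable {T Jt Ss Ts Tst : Kspace →L[ℂ] Kspace} {t s : ℝ}

/-- `J t` is self-adjoint. -/
lemma J_selfadj (ht : 0 ≤ t)
    (hJ : ∀ g : Kspace, (Jt g : ℝ → ℂ) =ᵐ[mu0] fun x => if x < t then g (t - x) else 0) :
    Jt = ContinuousLinearMap.adjoint Jt := by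
  rw [ContinuousLinearMap.eq_adjoint_iff]
  intro a b
  rw [L2.inner_def, L2.inner_def]
  have h1 : ∫ x, ⟪(Jt a) x, b x⟫ ∂mu0 = ∫ x, ⟪e0 a (t - x), e0 b x⟫ ∂mu0 := by
    refine integral_congr_ae ?_
    filter_upwards [coe_J ht hJ a, e0_ae b] with x h1 h2
    rw [h1, h2]
  have h2 : ∫ x, ⟪a x, (Jt b) x⟫ ∂mu0 = ∫ x, ⟪e0 a x, e0 b (t - x)⟫ ∂mu0 := by
    refine integral_congr_ae ?_
    filter_upwards [coe_J ht hJ b, e0_ae a] with x h1 h2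
    rw [h1, h2]
  rw [h1, h2]
  have h3 : ∫ x, ⟪e0 a (t - x), e0 b x⟫ ∂mu0 = ∫ x, ⟪e0 a (t - x), e0 b x⟫ ∂volume := by
    rw [mu0]
    refine setIntegral_eq_integral_of_forall_compl_eq_zero fun x hx => ?_
    rw [e0_nonpos b (by simpa using hx)]; simp
  have h4 : ∫ x, ⟪e0 a x, e0 b (t - x)⟫ ∂mu0 = ∫ x, ⟪e0 a x, e0 b (t - x)⟫ ∂volume := by
    rw [mu0]
    refine setIntegral_eq_integral_of_forall_compl_eq_zero fun x hx => ?_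
    rw [e0_nonpos a (by simpa using hx)]; simp
  rw [h3, h4]
  have h5 := (mp_sub_left t).integral_comp
    (MeasurableEquiv.subLeft t).measurableEmbedding (fun x => ⟪e0 a (t - x), e0 b x⟫)
  rw [← h5]
  congr 1
  funext x
  simp only [sub_sub_cancel]

variable (hT : ∀ f : Kspace, (T f : ℝ → ℂ) =ᵐ[mu0] fun x => if t < x then f (x - t) else 0)
variable (hJ : ∀ g : Kspace, (Jt g : ℝ → ℂ) =ᵐ[mu0] fun x => if x < t then g (t - x) else 0)
include hT

/-- P1 : `S t* (S t f) = f`. -/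
lemma adj_S_S (ht : 0 ≤ t) (f : Kspace) :
    ContinuousLinearMap.adjoint T (T f) = f := by
  refine Lp.ext ?_
  have h1 := coe_adj ht hT (T f)
  have h2 := ae_comp_add t (e0_S ht hT f)
  refine h1.trans (((mu0_ae_of_vol h2).trans ?_).trans (e0_ae f).symm)
  refine mu0_ae_of_vol (Filter.Eventually.of_forall fun x => ?_)
  simp only [add_sub_cancel_right]

include hJ

/-- P2 : `S t* (J t g) = 0`. -/
lemma adj_S_J (ht : 0 ≤ t) (g : Kspace) :
    ContinuousLinearMap.adjoint T (Jt g) = 0 := by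
  refine Lp.ext ?_
  have h1 := coe_adj ht hT (Jt g)
  have h2 := ae_comp_add t (e0_J ht hJ g)
  refine (h1.trans (mu0_ae_of_vol h2)).trans ?_
  refine (mu0_ae_iff.2 (Filter.Eventually.of_forall fun x hx => ?_)).trans (Lp.coeFn_zero ℂ 2 mu0).symm
  rcases lt_or_ge 0 (x + t) with h0 | h0
  · rw [if_pos h0, e0_nonpos g (by simp only [Set.mem_Ioi] at hx; linarith)]
    rfl
  · rw [if_neg (not_lt.2 h0)]; rfl

/-- P4 : `J t (S t v) = 0`. -/
lemma J_S (ht : 0 ≤ t) (v : Kspace) : Jt (T v) = 0 := by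
  refine Lp.ext ?_
  have h1 := coe_J ht hJ (T v)
  have h2 := ae_comp_sub_left t (e0_S ht hT v)
  refine (h1.trans (mu0_ae_of_vol h2)).trans ?_
  refine (mu0_ae_iff.2 (Filter.Eventually.of_forall fun x hx => ?_)).trans (Lp.coeFn_zero ℂ 2 mu0).symm
  simp only [Set.mem_Ioi] at hx
  rw [e0_nonpos v (by linarith)]
  rfl

/-- P3 : `S t (S t* u) + J t (J t u) = u`. -/
lemma S_adj_add_J_J (ht : 0 ≤ t) (u : Kspace) :
    T (ContinuousLinearMap.adjoint T u) + Jt (Jt u) = u := by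
  refine Lp.ext ?_
  have h1 : (T (ContinuousLinearMap.adjoint T u) : ℝ → ℂ)
      =ᵐ[mu0] fun x => if 0 < x - t then e0 u (x - t + t) else 0 :=
    (coe_S ht hT _).trans (mu0_ae_of_vol (ae_comp_sub t (e0_adj ht hT u)))
  have h2 : (Jt (Jt u) : ℝ → ℂ)
      =ᵐ[mu0] fun x => if 0 < t - x then e0 u (t - (t - x)) else 0 :=
    (coe_J ht hJ _).trans (mu0_ae_of_vol (ae_comp_sub_left t (e0_J ht hJ u)))
  have hne : ∀ᵐ x ∂mu0, x ≠ t := by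
    have : ∀ᵐ x ∂volume, x ≠ t := by
      rw [ae_iff]; simpa using measure_singleton t
    exact this.filter_mono (ae_mono Measure.restrict_le_self)
  filter_upwards [Lp.coeFn_add (T (ContinuousLinearMap.adjoint T u)) (Jt (Jt u)), h1, h2, hne,
    e0_ae u] with x ha hb hc hd he
  rw [ha]
  simp only [Pi.add_apply]
  rw [hb, hc]
  rcases lt_trichotomy x t with h | h | h
  · rw [if_neg (by linarith), if_pos (by linarith), sub_sub_cancel, zero_add]
    exact he.symm
  · exact absurd h hd
  · rw [if_pos (by linarith), if_neg (by linarith), sub_add_cancel, add_zero]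
    exact he.symm

end Identities
section Semigroup

variable {T Ss Tst Jt Js Jst : Kspace →L[ℂ] Kspace} {t s : ℝ}

/-- P6 : `S s (S t f) = S (s+t) f`. -/
lemma S_comp_S (ht : 0 ≤ t) (hs : 0 ≤ s)
    (hT : ∀ f : Kspace, (T f : ℝ → ℂ) =ᵐ[mu0] fun x => if t < x then f (x - t) else 0)
    (hSs : ∀ f : Kspace, (Ss f : ℝ → ℂ) =ᵐ[mu0] fun x => if s < x then f (x - s) else 0)
    (hTst : ∀ f : Kspace, (Tst f : ℝ → ℂ) =ᵐ[mu0] fun x => if s + t < x then f (x - (s + t)) else 0)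
    (f : Kspace) : Ss (T f) = Tst f := by
  refine Lp.ext ?_
  have h1 : (Ss (T f) : ℝ → ℂ) =ᵐ[mu0] fun x => e0 f (x - s - t) :=
    (coe_S hs hSs _).trans (mu0_ae_of_vol (ae_comp_sub s (e0_S ht hT f)))
  refine h1.trans (Filter.EventuallyEq.trans ?_ (coe_S (by linarith : (0:ℝ) ≤ s + t) hTst f).symm)
  exact Filter.Eventually.of_forall fun x => by simp only []; rw [sub_sub]

/-- P7 : `S s (J t g) + J s (S t* g) = J (s+t) g`. -/
lemma S_J_add_J_adj (ht : 0 ≤ t) (hs : 0 ≤ s)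
    (hT : ∀ f : Kspace, (T f : ℝ → ℂ) =ᵐ[mu0] fun x => if t < x then f (x - t) else 0)
    (hSs : ∀ f : Kspace, (Ss f : ℝ → ℂ) =ᵐ[mu0] fun x => if s < x then f (x - s) else 0)
    (hJt : ∀ g : Kspace, (Jt g : ℝ → ℂ) =ᵐ[mu0] fun x => if x < t then g (t - x) else 0)
    (hJs : ∀ g : Kspace, (Js g : ℝ → ℂ) =ᵐ[mu0] fun x => if x < s then g (s - x) else 0)
    (hJst : ∀ g : Kspace, (Jst g : ℝ → ℂ) =ᵐ[mu0] fun x => if x < s + t then g (s + t - x) else 0)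
    (g : Kspace) : Ss (Jt g) + Js (ContinuousLinearMap.adjoint T g) = Jst g := by
  refine Lp.ext ?_
  have h1 : (Ss (Jt g) : ℝ → ℂ)
      =ᵐ[mu0] fun x => if 0 < x - s then e0 g (t - (x - s)) else 0 :=
    (coe_S hs hSs _).trans (mu0_ae_of_vol (ae_comp_sub s (e0_J ht hJt g)))
  have h2 : (Js (ContinuousLinearMap.adjoint T g) : ℝ → ℂ)
      =ᵐ[mu0] fun x => if 0 < s - x then e0 g (s - x + t) else 0 :=
    (coe_J hs hJs _).trans (mu0_ae_of_vol (ae_comp_sub_left s (e0_adj ht hT g)))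
  have hne : ∀ᵐ x ∂mu0, x ≠ s := by
    have : ∀ᵐ x ∂volume, x ≠ s := by
      rw [ae_iff]; simpa using measure_singleton s
    exact this.filter_mono (ae_mono Measure.restrict_le_self)
  filter_upwards [Lp.coeFn_add (Ss (Jt g)) (Js (ContinuousLinearMap.adjoint T g)), h1, h2, hne,
    coe_J (by linarith : (0:ℝ) ≤ s + t) hJst g] with x ha hb hc hd he
  rw [ha]
  simp only [Pi.add_apply]
  rw [hb, hc, he]
  rcases lt_trichotomy x s with h | h | h
  · rw [if_neg (by linarith), if_pos (by linarith), zero_add]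
    congr 1
    ring
  · exact absurd h hd
  · rw [if_pos (by linarith), if_neg (by linarith), add_zero]
    congr 1
    ring

/-- P9a : `S 0 = 1`. -/
lemma S_zero_eq_one
    (hT : ∀ f : Kspace, (T f : ℝ → ℂ) =ᵐ[mu0] fun x => if (0:ℝ) < x then f (x - 0) else 0) :
    T = 1 := by
  refine ContinuousLinearMap.ext fun f => Lp.ext ?_
  refine (coe_S le_rfl hT f).trans ?_
  refine Filter.EventuallyEq.trans ?_ (e0_ae f).symm
  exact Filter.Eventually.of_forall fun x => by simp only []; rw [sub_zero]

/-- P9b : `J 0 g = 0`. -/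
lemma J_zero_eq_zero
    (hJ : ∀ g : Kspace, (Jt g : ℝ → ℂ) =ᵐ[mu0] fun x => if x < (0:ℝ) then g (0 - x) else 0)
    (g : Kspace) : Jt g = 0 := by
  refine Lp.ext ?_
  refine (coe_J le_rfl hJ g).trans ?_
  refine (mu0_ae_iff.2 (Filter.Eventually.of_forall fun x hx => ?_)).trans
    (Lp.coeFn_zero ℂ 2 mu0).symm
  simp only [Set.mem_Ioi] at hx
  rw [e0_nonpos g (by linarith)]
  rfl

end Semigroup
section Continuity

/-- continuity of translation in `L²(ℝ)` -/
lemma tendsto_eLpNorm_translate {h : ℝ → ℂ} (hh : MemLp h 2 volume) :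
    Tendsto (fun s : ℝ => eLpNorm (fun x => h (x - s) - h x) 2 volume) (𝓝 0) (𝓝 0) := by
  rw [ENNReal.tendsto_nhds_zero]
  intro ε hε
  suffices H : ∀ᶠ s in 𝓝 (0:ℝ), eLpNorm (fun x => h (x - s) - h x) 2 volume ≤ min ε 1 by
    filter_upwards [H] with s hs using hs.trans (min_le_left _ _)
  set δ : ℝ≥0∞ := min ε 1 with hδ
  have hδ0 : δ ≠ 0 := (lt_min hε zero_lt_one).ne'
  have hδtop : δ ≠ ⊤ := by
    refine ne_top_of_le_ne_top ?_ (min_le_right _ _); exact ENNReal.one_ne_top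
  have hδ30 : δ / 3 ≠ 0 := by
    simp [ENNReal.div_eq_zero_iff, hδ0]
  obtain ⟨φ, φsupp, φclose, φcont, φmem⟩ :=
    hh.exists_hasCompactSupport_eLpNorm_sub_le (by norm_num : (2:ℝ≥0∞) ≠ ∞) hδ30
  obtain ⟨R, hR⟩ := φsupp.isBounded.subset_closedBall (0:ℝ)
  set R' : ℝ := max R 0 with hR'def
  have hRsupp : tsupport φ ⊆ Set.Icc (-R') R' := by
    refine hR.trans ?_
    rw [Real.closedBall_eq_Icc]
    intro y hy
    constructor
    · have := hy.1; simp only [zero_sub] at this; exact le_trans (by simp [hR'def]) this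
    · have := hy.2; simp only [zero_add] at this; exact this.trans (le_max_left _ _)
  have φuc : UniformContinuous φ :=
    φcont.uniformContinuous_of_tendsto_cocompact φsupp.is_zero_at_infty
  set M : ℝ≥0∞ := volume (Set.Icc (-(R' + 1)) (R' + 1)) with hM
  have hMtop : M ≠ ⊤ := by
    rw [hM, Real.volume_Icc]; exact ENNReal.ofReal_ne_top
  set Mh : ℝ≥0∞ := M ^ (2:ℝ≥0∞).toReal⁻¹ with hMh
  have hMhtop : Mh ≠ ⊤ := by
    rw [hMh]
    exact ENNReal.rpow_ne_top_of_nonneg (by norm_num) hMtop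
  set b : ℝ := ((δ / 3) / (Mh + 1)).toReal with hb
  have hδ3top : δ / 3 ≠ ⊤ := by
    simp [ENNReal.div_eq_top, hδtop]
  have hquotne : (δ / 3) / (Mh + 1) ≠ ⊤ := by
    rw [Ne, ENNReal.div_eq_top]
    push_neg
    exact ⟨fun _ => by simp, fun h => absurd h hδ3top⟩
  have hbpos : 0 < b := by
    rw [hb]
    refine ENNReal.toReal_pos ?_ hquotne
    rw [Ne, ENNReal.div_eq_zero_iff]
    push_neg
    refine ⟨hδ30, ?_⟩
    exact ENNReal.add_ne_top.2 ⟨hMhtop, ENNReal.one_ne_top⟩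
  obtain ⟨dlt, hdlt0, hdlt⟩ := Metric.uniformContinuous_iff.1 φuc b hbpos
  have hev : ∀ᶠ s in 𝓝 (0:ℝ), |s| < min dlt 1 := by
    have hmem := Metric.ball_mem_nhds (0:ℝ) (lt_min hdlt0 one_pos)
    filter_upwards [hmem] with s hs
    simpa [Real.dist_eq] using hs
  filter_upwards [hev] with s hs
  have hs1 : |s| < 1 := hs.trans_le (min_le_right _ _)
  have hsd : |s| < dlt := hs.trans_le (min_le_left _ _)
  -- measurability facts
  have asm_hs : AEStronglyMeasurable (fun x => h (x - s)) volume :=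
    hh.1.comp_quasiMeasurePreserving (mp_sub s).quasiMeasurePreserving
  have asm_phis : AEStronglyMeasurable (fun x => φ (x - s)) volume :=
    (φcont.comp (continuous_id.sub continuous_const)).aestronglyMeasurable
  have asm1 : AEStronglyMeasurable (fun x => h (x - s) - φ (x - s)) volume :=
    asm_hs.sub asm_phis
  have asm2 : AEStronglyMeasurable (fun x => φ (x - s) - φ x) volume :=
    asm_phis.sub φcont.aestronglyMeasurable
  have asm3 : AEStronglyMeasurable (fun x => φ x - h x) volume :=
    φcont.aestronglyMeasurable.sub hh.1
  have decomp : (fun x => h (x - s) - h x)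
      = fun x => (h (x - s) - φ (x - s)) + ((φ (x - s) - φ x) + (φ x - h x)) := by
    funext x; ring
  -- the three terms
  have term1 : eLpNorm (fun x => h (x - s) - φ (x - s)) 2 volume ≤ δ / 3 := by
    have e1 : eLpNorm ((h - φ) ∘ fun x => x - s) 2 volume = eLpNorm (h - φ) 2 volume :=
      eLpNorm_comp_measurePreserving (hh.1.sub φcont.aestronglyMeasurable) (mp_sub s)
    calc eLpNorm (fun x => h (x - s) - φ (x - s)) 2 volume
        = eLpNorm (h - φ) 2 volume := e1
      _ ≤ δ / 3 := φclose
  have term3 : eLpNorm (fun x => φ x - h x) 2 volume ≤ δ / 3 := by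
    have : eLpNorm (φ - h) 2 volume = eLpNorm (h - φ) 2 volume := eLpNorm_sub_comm _ _ _ _
    calc eLpNorm (fun x => φ x - h x) 2 volume
        = eLpNorm (h - φ) 2 volume := this
      _ ≤ δ / 3 := φclose
  have term2 : eLpNorm (fun x => φ (x - s) - φ x) 2 volume ≤ δ / 3 := by
    set ψ : ℝ → ℂ := fun x => φ (x - s) - φ x with hψ
    have hsupp : ∀ x ∉ Set.Icc (-(R' + 1)) (R' + 1), ψ x = 0 := by
      intro x hx
      simp only [Set.mem_Icc, not_and_or, not_le] at hx
      have hx' : R' + 1 < |x| := by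
        rcases hx with hx | hx
        · rw [abs_of_neg (by linarith [le_max_right R 0] : x < 0)]; linarith
        · rw [abs_of_pos (by linarith [le_max_right R 0] : 0 < x)]; exact hx
      have h1 : φ x = 0 := by
        refine image_eq_zero_of_notMem_tsupport fun hmem => ?_
        have := hRsupp hmem
        rw [Set.mem_Icc] at this
        rcases abs_cases x with ⟨he, _⟩ | ⟨he, _⟩ <;> rw [he] at hx' <;> linarith [this.1, this.2]
      have h2 : φ (x - s) = 0 := by
        refine image_eq_zero_of_notMem_tsupport fun hmem => ?_
        have := hRsupp hmem
        rw [Set.mem_Icc] at this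
        have habs : |x - s| ≤ R' := abs_le.2 this
        have : |x| - |s| ≤ |x - s| := by
          have := abs_sub_abs_le_abs_sub x s
          linarith
        linarith
      rw [hψ]; simp [h1, h2]
    have hbound : ∀ᵐ x ∂(volume.restrict (Set.Icc (-(R' + 1)) (R' + 1))), ‖ψ x‖ ≤ b := by
      refine Filter.Eventually.of_forall fun x => ?_
      have : dist (x - s) x < dlt := by
        rw [Real.dist_eq]
        simpa using hsd
      have := hdlt this
      rw [dist_eq_norm] at this
      exact this.le
    have hind : ψ = (Set.Icc (-(R' + 1)) (R' + 1)).indicator ψ :=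
      (Set.indicator_eq_self.2 (Function.support_subset_iff'.2 hsupp)).symm
    calc eLpNorm ψ 2 volume
        = eLpNorm ((Set.Icc (-(R' + 1)) (R' + 1)).indicator ψ) 2 volume := by rw [← hind]
      _ = eLpNorm ψ 2 (volume.restrict (Set.Icc (-(R' + 1)) (R' + 1))) :=
          eLpNorm_indicator_eq_eLpNorm_restrict measurableSet_Icc
      _ ≤ (volume.restrict (Set.Icc (-(R' + 1)) (R' + 1))) Set.univ ^ (2:ℝ≥0∞).toReal⁻¹
            * ENNReal.ofReal b := eLpNorm_le_of_ae_bound hbound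
      _ = Mh * ENNReal.ofReal b := by
          rw [Measure.restrict_apply_univ]
      _ ≤ δ / 3 := by
          rw [hb, ENNReal.ofReal_toReal hquotne]
          calc Mh * ((δ / 3) / (Mh + 1))
              ≤ (Mh + 1) * ((δ / 3) / (Mh + 1)) :=
                mul_le_mul_left (self_le_add_right _ _) _
            _ = δ / 3 := ENNReal.mul_div_cancel (by simp) (ENNReal.add_ne_top.2 ⟨hMhtop, ENNReal.one_ne_top⟩)
  calc eLpNorm (fun x => h (x - s) - h x) 2 volume
      = eLpNorm (fun x => (h (x - s) - φ (x - s)) + ((φ (x - s) - φ x) + (φ x - h x))) 2 volume := by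
        rw [← decomp]
    _ ≤ eLpNorm (fun x => h (x - s) - φ (x - s)) 2 volume
        + eLpNorm (fun x => (φ (x - s) - φ x) + (φ x - h x)) 2 volume :=
        eLpNorm_add_le asm1 (asm2.add asm3) one_le_two
    _ ≤ eLpNorm (fun x => h (x - s) - φ (x - s)) 2 volume
        + (eLpNorm (fun x => φ (x - s) - φ x) 2 volume + eLpNorm (fun x => φ x - h x) 2 volume) :=
        add_le_add_right (eLpNorm_add_le asm2 asm3 one_le_two) _
    _ ≤ δ / 3 + (δ / 3 + δ / 3) := by
        exact add_le_add term1 (add_le_add term2 term3)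
    _ = δ := by
        rw [← add_assoc]
        exact ENNReal.add_thirds δ

end Continuity
section Components

lemma KT2 {h : ℝ → ℂ} (hh : MemLp h 2 volume) (u : ℝ) :
    Tendsto (fun t => eLpNorm (fun x => h (x - t) - h (x - u)) 2 volume) (𝓝 u) (𝓝 0) := by
  have base := tendsto_eLpNorm_translate hh
  have hsub : Tendsto (fun t : ℝ => t - u) (𝓝 u) (𝓝 0) := by
    have := ((continuous_id.sub (continuous_const (y := u)))).tendsto u
    simpa [Pi.sub_def] using this
  have comp := base.comp hsub
  refine comp.congr fun t => ?_
  simp only [Function.comp_apply]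
  have e1 : eLpNorm ((fun y => h (y - (t - u)) - h y) ∘ fun x => x - u) 2 volume
      = eLpNorm (fun y => h (y - (t - u)) - h y) 2 volume :=
    eLpNorm_comp_measurePreserving
      ((hh.1.comp_quasiMeasurePreserving (mp_sub (t - u)).quasiMeasurePreserving).sub hh.1)
      (mp_sub u)
  rw [← e1]
  congr 1
  funext x
  simp only [Function.comp_apply]
  rw [show x - u - (t - u) = x - t by ring]

variable {Sop Jop : ℝ → Kspace →L[ℂ] Kspace}

/-- strong continuity of `t ↦ S t f` -/
lemma tendsto_S
    (hS : ∀ t ≥ (0:ℝ), ∀ f : Kspace,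
      (Sop t f : ℝ → ℂ) =ᵐ[mu0] fun x => if t < x then f (x - t) else 0)
    (f : Kspace) {u : ℝ} (hu : 0 ≤ u) :
    Tendsto (fun t => Sop t f) (𝓝[Set.Ici 0] u) (𝓝 (Sop u f)) := by
  rw [tendsto_iff_norm_sub_tendsto_zero]
  have hmem := memLp_e0 f
  have hfin : ∀ t : ℝ, eLpNorm (fun x => e0 f (x - t) - e0 f (x - u)) 2 volume ≠ ⊤ :=
    fun t => ((hmem.comp_measurePreserving (mp_sub t)).sub
      (hmem.comp_measurePreserving (mp_sub u))).2.ne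
  have key : ∀ t : ℝ, 0 ≤ t → ‖Sop t f - Sop u f‖
      ≤ (eLpNorm (fun x => e0 f (x - t) - e0 f (x - u)) 2 volume).toReal := by
    intro t ht
    rw [Lp.norm_def]
    have hcoe : ((Sop t f - Sop u f : Kspace) : ℝ → ℂ)
        =ᵐ[mu0] fun x => e0 f (x - t) - e0 f (x - u) := by
      filter_upwards [Lp.coeFn_sub (Sop t f) (Sop u f), coe_S ht (hS t ht) f,
        coe_S hu (hS u hu) f] with x h1 h2 h3
      rw [h1, Pi.sub_apply, h2, h3]
    rw [eLpNorm_congr_ae hcoe]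
    refine ENNReal.toReal_mono (hfin t) ?_
    rw [mu0]
    exact eLpNorm_mono_measure _ Measure.restrict_le_self
  have hD : Tendsto
      (fun t => (eLpNorm (fun x => e0 f (x - t) - e0 f (x - u)) 2 volume).toReal)
      (𝓝[Set.Ici 0] u) (𝓝 0) := by
    have h1 := (KT2 hmem u).mono_left (nhdsWithin_le_nhds (s := Set.Ici (0:ℝ)))
    have h2 := (ENNReal.tendsto_toReal (a := 0) (by simp)).comp h1
    simpa [Function.comp_def] using h2
  refine squeeze_zero' (Filter.Eventually.of_forall fun t => norm_nonneg _) ?_ hD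
  filter_upwards [self_mem_nhdsWithin] with t ht using key t ht

/-- strong continuity of `t ↦ J t g` -/
lemma tendsto_J
    (hJ : ∀ t ≥ (0:ℝ), ∀ g : Kspace,
      (Jop t g : ℝ → ℂ) =ᵐ[mu0] fun x => if x < t then g (t - x) else 0)
    (g : Kspace) {u : ℝ} (hu : 0 ≤ u) :
    Tendsto (fun t => Jop t g) (𝓝[Set.Ici 0] u) (𝓝 (Jop u g)) := by
  rw [tendsto_iff_norm_sub_tendsto_zero]
  set hrev : ℝ → ℂ := fun y => e0 g (-y) with hrevdef
  have hmem : MemLp hrev 2 volume := (memLp_e0 g).comp_measurePreserving mp_neg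
  have hfin : ∀ t : ℝ, eLpNorm (fun x => hrev (x - t) - hrev (x - u)) 2 volume ≠ ⊤ :=
    fun t => ((hmem.comp_measurePreserving (mp_sub t)).sub
      (hmem.comp_measurePreserving (mp_sub u))).2.ne
  have key : ∀ t : ℝ, 0 ≤ t → ‖Jop t g - Jop u g‖
      ≤ (eLpNorm (fun x => hrev (x - t) - hrev (x - u)) 2 volume).toReal := by
    intro t ht
    rw [Lp.norm_def]
    have hcoe : ((Jop t g - Jop u g : Kspace) : ℝ → ℂ)
        =ᵐ[mu0] fun x => hrev (x - t) - hrev (x - u) := by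
      filter_upwards [Lp.coeFn_sub (Jop t g) (Jop u g), coe_J ht (hJ t ht) g,
        coe_J hu (hJ u hu) g] with x h1 h2 h3
      rw [h1, Pi.sub_apply, h2, h3, hrevdef]
      simp only [neg_sub]
    rw [eLpNorm_congr_ae hcoe]
    refine ENNReal.toReal_mono (hfin t) ?_
    rw [mu0]
    exact eLpNorm_mono_measure _ Measure.restrict_le_self
  have hD : Tendsto
      (fun t => (eLpNorm (fun x => hrev (x - t) - hrev (x - u)) 2 volume).toReal)
      (𝓝[Set.Ici 0] u) (𝓝 0) := by
    have h1 := (KT2 hmem u).mono_left (nhdsWithin_le_nhds (s := Set.Ici (0:ℝ)))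
    have h2 := (ENNReal.tendsto_toReal (a := 0) (by simp)).comp h1
    simpa [Function.comp_def] using h2
  refine squeeze_zero' (Filter.Eventually.of_forall fun t => norm_nonneg _) ?_ hD
  filter_upwards [self_mem_nhdsWithin] with t ht using key t ht

/-- strong continuity of `t ↦ (S t)* g` -/
lemma tendsto_adj
    (hS : ∀ t ≥ (0:ℝ), ∀ f : Kspace,
      (Sop t f : ℝ → ℂ) =ᵐ[mu0] fun x => if t < x then f (x - t) else 0)
    (g : Kspace) {u : ℝ} (hu : 0 ≤ u) :
    Tendsto (fun t => ContinuousLinearMap.adjoint (Sop t) g) (𝓝[Set.Ici 0] u)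
      (𝓝 (ContinuousLinearMap.adjoint (Sop u) g)) := by
  rw [tendsto_iff_norm_sub_tendsto_zero]
  have hmem := memLp_e0 g
  have hfin : ∀ t : ℝ, eLpNorm (fun x => e0 g (x + t) - e0 g (x + u)) 2 volume ≠ ⊤ :=
    fun t => ((hmem.comp_measurePreserving (mp_add t)).sub
      (hmem.comp_measurePreserving (mp_add u))).2.ne
  have key : ∀ t : ℝ, 0 ≤ t →
      ‖ContinuousLinearMap.adjoint (Sop t) g - ContinuousLinearMap.adjoint (Sop u) g‖
      ≤ (eLpNorm (fun x => e0 g (x + t) - e0 g (x + u)) 2 volume).toReal := by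
    intro t ht
    rw [Lp.norm_def]
    have hcoe : ((ContinuousLinearMap.adjoint (Sop t) g
          - ContinuousLinearMap.adjoint (Sop u) g : Kspace) : ℝ → ℂ)
        =ᵐ[mu0] fun x => e0 g (x + t) - e0 g (x + u) := by
      filter_upwards [Lp.coeFn_sub (ContinuousLinearMap.adjoint (Sop t) g)
        (ContinuousLinearMap.adjoint (Sop u) g), coe_adj ht (hS t ht) g,
        coe_adj hu (hS u hu) g] with x h1 h2 h3
      rw [h1, Pi.sub_apply, h2, h3]
    rw [eLpNorm_congr_ae hcoe]
    refine ENNReal.toReal_mono (hfin t) ?_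
    rw [mu0]
    exact eLpNorm_mono_measure _ Measure.restrict_le_self
  have hD : Tendsto
      (fun t => (eLpNorm (fun x => e0 g (x + t) - e0 g (x + u)) 2 volume).toReal)
      (𝓝[Set.Ici 0] u) (𝓝 0) := by
    have hneg : Tendsto (fun t : ℝ => -t) (𝓝[Set.Ici 0] u) (𝓝 (-u)) :=
      (continuous_neg.tendsto u).mono_left (nhdsWithin_le_nhds (s := Set.Ici (0:ℝ)))
    have h1 := (KT2 hmem (-u)).comp hneg
    have h1' : Tendsto (fun t => eLpNorm (fun x => e0 g (x + t) - e0 g (x + u)) 2 volume)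
        (𝓝[Set.Ici 0] u) (𝓝 0) := by
      refine h1.congr fun t => ?_
      simp only [Function.comp_apply]
      congr 1
      funext x
      rw [sub_neg_eq_add, sub_neg_eq_add]
    have h2 := (ENNReal.tendsto_toReal (a := 0) (by simp)).comp h1'
    simpa [Function.comp_def] using h2
  refine squeeze_zero' (Filter.Eventually.of_forall fun t => norm_nonneg _) ?_ hD
  filter_upwards [self_mem_nhdsWithin] with t ht using key t ht

end Components

end Stmt12

open Stmt12 in
/-- on `K' = K ⊕ K` define, for `t ≥ 0`,
`S'_t(f ⊕ g) = (S_t f + J_t g) ⊕ (S_t^* g)`, where `(J_t g)(x) = g(t-x)` for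
`0 < x < t` and `0` for `x > t`.  Then every `S'_t` is unitary, `S'_0 = I`,
`S'_{t+s} = S'_t S'_s`, `t ↦ S'_t(f ⊕ g)` is continuous, and
`S'_t(f ⊕ 0) = (S_t f) ⊕ 0`; i.e. `(S'_t)` is a strongly continuous semigroup of
unitaries dilating the right-shift semigroup `(S_t)`. -/
theorem stmt_12
    -- the right-shift semigroup `S` on `K` and its adjoint:
    (S : ℝ → Kspace →L[ℂ] Kspace)
    (hS : ∀ t ≥ (0:ℝ), ∀ f : Kspace,
      (S t f : ℝ → ℂ) =ᵐ[mu0] fun x => if t < x then f (x - t) else 0)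
    -- the flip operators `J_t`:
    (J : ℝ → Kspace →L[ℂ] Kspace)
    (hJ : ∀ t ≥ (0:ℝ), ∀ g : Kspace,
      (J t g : ℝ → ℂ) =ᵐ[mu0] fun x => if x < t then g (t - x) else 0)
    -- the dilation `S'`:
    (S' : ℝ → K2 →L[ℂ] K2)
    (hS' : ∀ t ≥ (0:ℝ), ∀ f g : Kspace,
      S' t (pmk f g) = pmk (S t f + J t g) (ContinuousLinearMap.adjoint (S t) g)) :
    (∀ t ≥ (0:ℝ), (∀ x : K2, ‖S' t x‖ = ‖x‖) ∧ Function.Surjective (S' t)) ∧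
    S' 0 = 1 ∧
    (∀ s ≥ (0:ℝ), ∀ t ≥ (0:ℝ), S' (s + t) = (S' s).comp (S' t)) ∧
    (∀ f g : Kspace, ContinuousOn (fun t => S' t (pmk f g)) (Set.Ici (0:ℝ))) ∧
    (∀ t ≥ (0:ℝ), ∀ f : Kspace, S' t (pmk f 0) = pmk (S t f) 0) := by
  have hS'' : ∀ t, 0 ≤ t → ∀ z : K2,
      S' t z = pmk (S t z.fst + J t z.snd) (ContinuousLinearMap.adjoint (S t) z.snd) :=
    fun t ht z => hS' t ht z.fst z.snd
  refine ⟨?_, ?_, ?_, ?_, ?_⟩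
  · -- unitarity
    intro t ht
    have hJsa := Stmt12.J_selfadj ht (hJ t ht)
    constructor
    · intro x
      have hP1 := Stmt12.adj_S_S (hS t ht) ht x.fst
      have hP2 := Stmt12.adj_S_J (hS t ht) (hJ t ht) ht x.snd
      have hP3 := Stmt12.S_adj_add_J_J (hS t ht) (hJ t ht) ht x.snd
      set a := S t x.fst with ha
      set b := J t x.snd with hb
      set v := ContinuousLinearMap.adjoint (S t) x.snd with hv
      have hx : S' t x = pmk (a + b) v := hS'' t ht x
      have t1 : @inner ℂ _ _ a a = @inner ℂ _ _ x.fst x.fst := by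
        rw [← ContinuousLinearMap.adjoint_inner_right, hP1]
      have t2 : @inner ℂ _ _ a b = 0 := by
        rw [← ContinuousLinearMap.adjoint_inner_right, hP2, inner_zero_right]
      have t3 : @inner ℂ _ _ b a = 0 := by
        rw [← inner_conj_symm, t2, map_zero]
      have t4 : @inner ℂ _ _ b b = @inner ℂ _ _ x.snd (J t (J t x.snd)) := by
        have h := ContinuousLinearMap.adjoint_inner_left (J t) b x.snd
        rw [← hJsa] at h
        exact h
      have t5 : @inner ℂ _ _ v v = @inner ℂ _ _ x.snd (S t v) :=
        ContinuousLinearMap.adjoint_inner_left (S t) v x.snd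
      have hP3' : J t (J t x.snd) + S t v = x.snd := by
        rw [add_comm]; exact hP3
      have hsum : @inner ℂ _ _ (a + b) (a + b) + @inner ℂ _ _ v v
          = @inner ℂ _ _ x.fst x.fst + @inner ℂ _ _ x.snd x.snd := by
        rw [inner_add_add_self, t1, t2, t3, t4, t5, add_zero, add_zero, add_assoc,
          ← inner_add_right, hP3']
      have hnorm : ‖S' t x‖ ^ 2 = ‖x‖ ^ 2 := by
        calc ‖S' t x‖ ^ 2 = ‖a + b‖ ^ 2 + ‖v‖ ^ 2 := by
              rw [hx]; exact WithLp.prod_norm_sq_eq_of_L2 _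
          _ = RCLike.re (@inner ℂ _ _ (a + b) (a + b) + @inner ℂ _ _ v v) := by
              rw [map_add, ← InnerProductSpace.norm_sq_eq_re_inner (𝕜 := ℂ), ← InnerProductSpace.norm_sq_eq_re_inner (𝕜 := ℂ)]
          _ = RCLike.re (@inner ℂ _ _ x.fst x.fst + @inner ℂ _ _ x.snd x.snd) := by rw [hsum]
          _ = ‖x.fst‖ ^ 2 + ‖x.snd‖ ^ 2 := by
              rw [map_add, ← InnerProductSpace.norm_sq_eq_re_inner (𝕜 := ℂ), ← InnerProductSpace.norm_sq_eq_re_inner (𝕜 := ℂ)]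
          _ = ‖x‖ ^ 2 := (WithLp.prod_norm_sq_eq_of_L2 x).symm
      rw [← Real.sqrt_sq (norm_nonneg (S' t x)), hnorm, Real.sqrt_sq (norm_nonneg x)]
    · intro y
      have hP1 := Stmt12.adj_S_S (hS t ht) ht y.snd
      have hP2 := Stmt12.adj_S_J (hS t ht) (hJ t ht) ht y.fst
      have hP3 := Stmt12.S_adj_add_J_J (hS t ht) (hJ t ht) ht y.fst
      have hP4 := Stmt12.J_S (hS t ht) (hJ t ht) ht y.snd
      refine ⟨pmk (ContinuousLinearMap.adjoint (S t) y.fst) (J t y.fst + S t y.snd), ?_⟩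
      rw [hS' t ht]
      have c1 : S t (ContinuousLinearMap.adjoint (S t) y.fst) + J t (J t y.fst + S t y.snd) = y.fst := by
        rw [map_add, hP4, add_zero]
        exact hP3
      have c2 : ContinuousLinearMap.adjoint (S t) (J t y.fst + S t y.snd) = y.snd := by
        rw [map_add, hP2, hP1, zero_add]
      rw [c1, c2]
      rfl
  · -- S' 0 = 1
    refine ContinuousLinearMap.ext fun x => ?_
    have hone : S 0 = 1 := Stmt12.S_zero_eq_one (hS 0 le_rfl)
    have hJ0 : J 0 x.snd = 0 := Stmt12.J_zero_eq_zero (hJ 0 le_rfl) x.snd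
    have h1 := hS'' 0 le_rfl x
    rw [hone, hJ0] at h1
    have h2 : S' 0 x = WithLp.toLp 2 (x.fst, x.snd) := by
      simpa [ContinuousLinearMap.one_def, ContinuousLinearMap.adjoint_id, pmk] using h1
    exact h2
  · -- semigroup
    intro s hs t ht
    have hst : (0:ℝ) ≤ s + t := by linarith
    refine ContinuousLinearMap.ext fun x => ?_
    have hS_ts : ∀ f : Kspace,
        ((S (s+t)) f : ℝ → ℂ) =ᵐ[mu0] fun x => if t + s < x then f (x - (t + s)) else 0 := by
      rw [add_comm t s]
      exact hS (s+t) hst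
    have hcomp1 : S s (S t x.fst) = S (s+t) x.fst :=
      Stmt12.S_comp_S ht hs (hS t ht) (hS s hs) (hS (s+t) hst) x.fst
    have hcomp2 : ∀ f, S t (S s f) = S (s+t) f := fun f =>
      Stmt12.S_comp_S hs ht (hS s hs) (hS t ht) hS_ts f
    have hop : S (s+t) = (S t).comp (S s) := ContinuousLinearMap.ext fun f => (hcomp2 f).symm
    have hadj : ContinuousLinearMap.adjoint (S (s+t)) x.snd
        = ContinuousLinearMap.adjoint (S s) (ContinuousLinearMap.adjoint (S t) x.snd) := by
      rw [hop, ContinuousLinearMap.adjoint_comp]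
      rfl
    have hP7 := Stmt12.S_J_add_J_adj ht hs (hS t ht) (hS s hs) (hJ t ht) (hJ s hs)
      (hJ (s+t) hst) x.snd
    rw [ContinuousLinearMap.comp_apply, hS'' (s+t) hst x, hS'' t ht x, hS' s hs,
      map_add (S s), hcomp1, hadj, add_assoc, hP7]
  · -- strong continuity
    intro f g u hu
    have hu' : (0:ℝ) ≤ u := hu
    have h1 := Stmt12.tendsto_S hS f hu'
    have h2 := Stmt12.tendsto_J hJ g hu'
    have h3 := Stmt12.tendsto_adj hS g hu'
    have h4 : Filter.Tendsto
        (fun t => pmk (S t f + J t g) (ContinuousLinearMap.adjoint (S t) g))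
        (nhdsWithin u (Set.Ici 0))
        (nhds (pmk (S u f + J u g) (ContinuousLinearMap.adjoint (S u) g))) := by
      have hpair : Filter.Tendsto
          (fun t => ((S t f + J t g), (ContinuousLinearMap.adjoint (S t) g)))
          (nhdsWithin u (Set.Ici 0))
          (nhds ((S u f + J u g), (ContinuousLinearMap.adjoint (S u) g))) :=
        (h1.add h2).prodMk_nhds h3
      exact (((WithLp.prodContinuousLinearEquiv 2 ℂ Kspace Kspace).symm.continuous.tendsto
        _).comp hpair)
    have h5 : Filter.Tendsto
        (fun t => pmk (S t f + J t g) (ContinuousLinearMap.adjoint (S t) g))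
        (nhdsWithin u (Set.Ici 0)) (nhds (S' u (pmk f g))) := by
      rw [hS' u hu']
      exact h4
    refine h5.congr' ?_
    filter_upwards [self_mem_nhdsWithin] with t ht
    exact (hS' t ht f g).symm
  · -- dilation property
    intro t ht f
    rw [hS' t ht f 0, map_zero, map_zero, add_zero]
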